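/- Let $\lambda$ be a partition of $n$ with at most two columns (all parts at most 2). Suppose $\mathtt t,\mathtt s$ are standard $\lambda$-tableaux with $\mathtt s\trianglelefteq\mathtt t$ in the dominance order on tableaux, and let $w\in\mathfrak S_n$ be the permutation with $\mathtt s=w\mathtt t$. Then $\ell(d(\mathtt s))=\ell(d(\mathtt t))+\ell(w)$, where $d(\mathtt t)$ is the unique permutation with $d(\mathtt t)\mathtt t^\lambda=\mathtt t$ and $\ell$ denotes Coxeter length in $\mathfrak S_n$. -/

import Mathlib

open scoped Classical
noncomputable section

def isWall (e x : ℤ) : Prop := 0 < x + 1 ∧ (x + 1) % e = 0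

def degStep (e u v : ℤ) : ℤ :=
  if isWall e u ∧ v < u then 1
  else if isWall e v ∧ v < u then -1
  else 0

def pathDeg (e : ℤ) (π : ℕ → ℤ) (r s : ℕ) : ℤ :=
  ∑ a ∈ Finset.Ico r s, degStep e (π a) (π (a + 1))

/-- A nonnegative `±1`-path on the interval `[u,v]`. -/
def IsPathOn (π : ℕ → ℤ) (u v : ℕ) : Prop :=
  (∀ a, u ≤ a → a ≤ v → 0 ≤ π a) ∧
  (∀ a, u ≤ a → a < v → π (a + 1) = π a + 1 ∨ π (a + 1) = π a - 1)

/-- `π[r,s]` is a positive arc (within `[u,v]`). -/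
def IsPosArc (e : ℤ) (π : ℕ → ℤ) (u v r s : ℕ) : Prop :=
  u ≤ r ∧ r < s ∧ s ≤ v ∧ isWall e (π r) ∧ π s = π r ∧
    ∀ c, r < c → c < s → π r < π c ∧ π c < π r + e

/-- `π[r,s]` is a negative arc (within `[u,v]`). -/
def IsNegArc (e : ℤ) (π : ℕ → ℤ) (u v r s : ℕ) : Prop :=
  u ≤ r ∧ r < s ∧ s ≤ v ∧ isWall e (π r) ∧ π s = π r ∧
    ∀ c, r < c → c < s → π r - e < π c ∧ π c < π r

def posArcs (e : ℤ) (π : ℕ → ℤ) (u v : ℕ) : Set (ℕ × ℕ) :=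
  {p | IsPosArc e π u v p.1 p.2}

def negArcs (e : ℤ) (π : ℕ → ℤ) (u v : ℕ) : Set (ℕ × ℕ) :=
  {p | IsNegArc e π u v p.1 p.2}


/-- A standard tableau of size `n` (0-based nodes): injective, image is a
Young diagram (downward closed), entries increase along rows and columns. -/
def IsStdTab (n : ℕ) (t : Fin n → ℕ × ℕ) : Prop :=
  Function.Injective t ∧
  (∀ r : Fin n, ∀ a b : ℕ, a ≤ (t r).1 → b ≤ (t r).2 → ∃ r' : Fin n, t r' = (a, b)) ∧
  (∀ r s : Fin n, (t r).1 ≤ (t s).1 → (t r).2 ≤ (t s).2 → r ≤ s)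

/-- Number of entries among the first `a` entries lying in column `j`. -/
def cntCol (n : ℕ) (t : Fin n → ℕ × ℕ) (a j : ℕ) : ℕ :=
  (Finset.univ.filter fun r : Fin n => (r : ℕ) < a ∧ (t r).2 = j).card

/-- The type-`A₁` path attached to a two-column tableau. -/
def pth (n : ℕ) (t : Fin n → ℕ × ℕ) (a : ℕ) : ℤ :=
  (cntCol n t a 0 : ℤ) - (cntCol n t a 1 : ℤ)

/-- Membership in the Young diagram of `(2^x, 1^y)` (0-based). -/
def memShape2 (x y : ℕ) (v : ℕ × ℕ) : Prop :=
  (v.1 < x ∧ v.2 < 2) ∨ (x ≤ v.1 ∧ v.1 < x + y ∧ v.2 = 0)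

/-- The residue of a node (0-based): column minus row, mod `e`. -/
def resNode (e : ℕ) (v : ℕ × ℕ) : ZMod e := (v.2 : ZMod e) - (v.1 : ZMod e)

/-- The row-reading standard tableau of shape `(2^x, 1^y)` (0-based). -/
def rowTab (x : ℕ) (n : ℕ) (r : Fin n) : ℕ × ℕ :=
  if (r : ℕ) < 2 * x then ((r : ℕ) / 2, (r : ℕ) % 2) else ((r : ℕ) - x, 0)

/-- Partial row sums of the shape of the restriction of `t` to its first `m`
entries: the number of entries among the first `m` lying in rows `0,…,r`. -/
def rowCnt (n : ℕ) (t : Fin n → ℕ × ℕ) (m r : ℕ) : ℕ :=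
  (Finset.univ.filter fun i : Fin n => (i : ℕ) < m ∧ (t i).1 ≤ r).card

/-- The dominance order on standard tableaux of the same shape. -/
def TabDom (n : ℕ) (s t : Fin n → ℕ × ℕ) : Prop :=
  ∀ m ≤ n, ∀ r, rowCnt n s m r ≤ rowCnt n t m r

/-- The Coxeter length of a permutation of `{0,…,n-1}`: its number of
inversions. -/
def invLen {n : ℕ} (w : Equiv.Perm (Fin n)) : ℕ :=
  ((Finset.univ ×ˢ Finset.univ : Finset (Fin n × Fin n)).filter
    fun p => p.1 < p.2 ∧ w p.2 < w p.1).card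

lemma rowTab_inj (x n : ℕ) : Function.Injective (rowTab x n) := by
  intro r r' h
  unfold rowTab at h
  split_ifs at h with h1 h2 h2 <;>
    simp only [Prod.mk.injEq] at h <;> (apply Fin.ext; omega)

lemma rowTab_lex (x n : ℕ) (i j : Fin n) (hij : i < j) :
    (rowTab x n i).1 < (rowTab x n j).1 ∨
      ((rowTab x n i).1 = (rowTab x n j).1 ∧ (rowTab x n i).2 < (rowTab x n j).2) := by
  have hij' : (i : ℕ) < (j : ℕ) := hij
  unfold rowTab
  split_ifs with h1 h2 h2 <;> simp <;> omega

/-- capacity of rows `0..r`: at most `2*(r+1)` entries -/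
lemma cap_lemma (n x y : ℕ) (t : Fin n → ℕ × ℕ) (ht : IsStdTab n t)
    (hsh : ∀ i, memShape2 x y (t i)) (m r : ℕ) :
    rowCnt n t m r ≤ 2 * (r + 1) := by
  have : rowCnt n t m r ≤ (Finset.range (r+1) ×ˢ Finset.range 2).card := by
    apply Finset.card_le_card_of_injOn t
    · intro k hk
      simp only [Finset.mem_coe, Finset.mem_filter] at hk
      simp only [Finset.mem_coe, Finset.mem_product, Finset.mem_range]
      refine ⟨by omega, ?_⟩
      rcases hsh k with h | h
      · exact h.2
      · omega
    · intro a _ b _ hab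
      exact ht.1 hab
  simpa [Finset.card_product, mul_comm] using this

/-- if rows `0..r1` are full among the first `m` entries, then the entry at `(r1,1)` is `< m` -/
lemma full_lemma (n x y : ℕ) (t : Fin n → ℕ × ℕ) (ht : IsStdTab n t)
    (hsh : ∀ i, memShape2 x y (t i))
    (m r1 : ℕ) (k0 : Fin n) (hk0 : t k0 = (r1, 1))
    (hfull : 2 * (r1 + 1) ≤ rowCnt n t m r1) : (k0 : ℕ) < m := by
  by_contra hge
  have hsub : rowCnt n t m r1 ≤ ((Finset.range (r1+1) ×ˢ Finset.range 2).erase (r1,1)).card := by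
    apply Finset.card_le_card_of_injOn t
    · intro k hk
      simp only [Finset.mem_coe, Finset.mem_filter] at hk
      have hne : t k ≠ (r1, 1) := by
        intro he
        have : k = k0 := ht.1 (he.trans hk0.symm)
        omega
      rw [Finset.mem_coe, Finset.mem_erase]
      refine ⟨hne, ?_⟩
      simp only [Finset.mem_product, Finset.mem_range]
      refine ⟨by omega, ?_⟩
      rcases hsh k with h | h
      · exact h.2
      · omega
    · intro a _ b _ hab
      exact ht.1 hab
  have hcard : ((Finset.range (r1+1) ×ˢ Finset.range 2).erase (r1,1)).card
      = 2 * (r1 + 1) - 1 := by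
    rw [Finset.card_erase_of_mem (by simp)]
    simp [Finset.card_product, mul_comm]
  omega

/-- the number of `k < m` lying in rows ≤ `r1` is at least `2*(r1+1)` if the entry at
`(r1,1)` is `< m`. -/
lemma fill_lemma (n : ℕ) (t : Fin n → ℕ × ℕ) (ht : IsStdTab n t)
    (m r1 : ℕ) (k0 : Fin n) (hk0 : t k0 = (r1, 1)) (hlt : (k0 : ℕ) < m) :
    2 * (r1 + 1) ≤ rowCnt n t m r1 := by
  have : (Finset.range (r1+1) ×ˢ Finset.range 2).card ≤ rowCnt n t m r1 := by
    apply Finset.card_le_card_of_surjOn t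
    intro p hp
    simp only [Finset.coe_product, Set.mem_prod, Finset.mem_coe, Finset.mem_range] at hp
    obtain ⟨k, hk⟩ := ht.2.1 k0 p.1 p.2 (by rw [hk0]; omega) (by rw [hk0]; omega)
    have hk2 : k ≤ k0 := ht.2.2 k k0 (by rw [hk, hk0]; omega) (by rw [hk, hk0]; omega)
    refine ⟨k, ?_, by rw [hk]⟩
    simp only [Finset.coe_filter, Set.mem_setOf_eq, Finset.mem_univ, true_and]
    exact ⟨by omega, by rw [hk]; omega⟩
  simpa [Finset.card_product, mul_comm] using this

/-- lower bound: first `m` entries contain column-0 nodes in rows `r1+1..r2`. -/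
lemma colseg_lemma (n : ℕ) (t : Fin n → ℕ × ℕ) (ht : IsStdTab n t)
    (m r1 r2 : ℕ) (k0 : Fin n) (hk0 : t k0 = (r2, 0)) (hlt : (k0 : ℕ) < m) :
    r2 - r1 ≤ (Finset.univ.filter fun k : Fin n =>
      (k : ℕ) < m ∧ r1 < (t k).1 ∧ (t k).1 ≤ r2 ∧ (t k).2 = 0).card := by
  have := Finset.card_le_card_of_surjOn (s := Finset.univ.filter fun k : Fin n =>
      (k : ℕ) < m ∧ r1 < (t k).1 ∧ (t k).1 ≤ r2 ∧ (t k).2 = 0)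
      (t := Finset.Ico (r1+1) (r2+1)) (fun k => (t k).1) ?_
  · simpa using this
  · intro rr hrr
    simp only [Finset.coe_Ico, Set.mem_Ico] at hrr
    obtain ⟨k, hk⟩ := ht.2.1 k0 rr 0 (by rw [hk0]; omega) (by rw [hk0])
    have hk2 : k ≤ k0 := ht.2.2 k k0 (by rw [hk, hk0]; omega) (by rw [hk, hk0])
    refine ⟨k, ?_, by simp [hk]⟩
    simp only [Finset.coe_filter, Set.mem_setOf_eq, Finset.mem_univ, true_and]
    rw [hk]
    refine ⟨by omega, by omega, by omega, rfl⟩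

lemma card_lt_filter (n m : ℕ) (hm : m ≤ n) :
    (Finset.univ.filter fun k : Fin n => (k : ℕ) < m).card = m := by
  conv_rhs => rw [← Finset.card_range m]
  apply Finset.card_nbij (fun k : Fin n => (k : ℕ))
  · intro k hk
    simp only [Finset.mem_coe, Finset.mem_filter] at hk
    simp [hk.2]
  · intro a _ b _ hab
    exact Fin.ext hab
  · intro c hc
    simp only [Finset.mem_coe, Finset.mem_range] at hc
    exact ⟨⟨c, by omega⟩, by simp [hc], rfl⟩

lemma key_contra (n x y : ℕ)
    (t s : Fin n → ℕ × ℕ) (ht : IsStdTab n t) (hs : IsStdTab n s)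
    (htsh : ∀ i, memShape2 x y (t i)) (hssh : ∀ i, memShape2 x y (s i))
    (hdom : TabDom n s t)
    (A B a b : Fin n) (r1 r2 : ℕ)
    (hAB : A < B) (htB : t B = (r1, 1)) (htA : t A = (r2, 0)) (hr : r1 < r2)
    (hsb : s b = (r1, 1)) (hsa : s a = (r2, 0)) (hba : b < a) : False := by
  set m : ℕ := (b : ℕ) + 1 with hm
  have hmn : m ≤ n := b.isLt
  have h2 : 2 * (r1 + 1) ≤ rowCnt n s m r1 := fill_lemma n s hs m r1 b hsb (by omega)
  have h1 : rowCnt n s m r1 ≤ rowCnt n t m r1 := hdom m hmn r1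
  have h4 : (B : ℕ) < m := full_lemma n x y t ht htsh m r1 B htB (le_trans h2 h1)
  have h5 : (A : ℕ) < m := by
    have : (A : ℕ) < (B : ℕ) := hAB
    omega
  have h6 := colseg_lemma n t ht m r1 r2 A htA h5
  -- disjoint union bound on the t side
  have h7 : rowCnt n t m r1 + (Finset.univ.filter fun k : Fin n =>
      (k : ℕ) < m ∧ r1 < (t k).1 ∧ (t k).1 ≤ r2 ∧ (t k).2 = 0).card ≤ m := by
    set T1 := Finset.univ.filter fun k : Fin n => (k : ℕ) < m ∧ (t k).1 ≤ r1 with hT1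
    set T2 := Finset.univ.filter fun k : Fin n =>
      (k : ℕ) < m ∧ r1 < (t k).1 ∧ (t k).1 ≤ r2 ∧ (t k).2 = 0 with hT2
    have hdisj : Disjoint T1 T2 := by
      rw [Finset.disjoint_left]
      intro k hk1 hk2
      simp only [hT1, hT2, Finset.mem_filter] at hk1 hk2
      omega
    have hsub : T1 ∪ T2 ⊆ Finset.univ.filter fun k : Fin n => (k : ℕ) < m := by
      intro k hk
      rcases Finset.mem_union.mp hk with h | h <;>
        simp only [hT1, hT2, Finset.mem_filter] at h <;>
        simp only [Finset.mem_filter, Finset.mem_univ, true_and] <;> omega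
    calc rowCnt n t m r1 + T2.card = (T1 ∪ T2).card := by
          rw [Finset.card_union_of_disjoint hdisj]; rfl
      _ ≤ (Finset.univ.filter fun k : Fin n => (k : ℕ) < m).card := Finset.card_le_card hsub
      _ = m := card_lt_filter n m hmn
  -- s-side partition
  have hsplit : rowCnt n s m r1 + (Finset.univ.filter fun k : Fin n =>
      (k : ℕ) < m ∧ ¬ (s k).1 ≤ r1).card = m := by
    have := Finset.card_filter_add_card_filter_not
      (s := Finset.univ.filter fun k : Fin n => (k : ℕ) < m)
      (p := fun k => (s k).1 ≤ r1)
    rw [Finset.filter_filter, Finset.filter_filter, card_lt_filter n m hmn] at this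
    exact this
  -- bound on the overflow set on the s side
  have h9 : (Finset.univ.filter fun k : Fin n =>
      (k : ℕ) < m ∧ ¬ (s k).1 ≤ r1).card ≤ r2 - (r1 + 1) := by
    have hcol : ∀ k : Fin n, (k : ℕ) < m → r1 < (s k).1 → (s k).2 = 0 ∧ (s k).1 < r2 := by
      intro k hkm hkr
      have hc2 : (s k).2 < 2 := by
        rcases hssh k with h | h
        · exact h.2
        · omega
      have hcol0 : (s k).2 = 0 := by
        by_contra hne
        have hc1 : (s k).2 = 1 := by omega
        have : b ≤ k := hs.2.2 b k (by rw [hsb]; omega) (by rw [hsb]; omega)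
        have hkb : k = b := by
          apply Fin.ext
          have : (b : ℕ) ≤ k := this
          omega
        rw [hkb, hsb] at hkr
        omega
      refine ⟨hcol0, ?_⟩
      by_contra hge
      have : a ≤ k := hs.2.2 a k (by rw [hsa]; omega) (by rw [hsa]; omega)
      have hak : (a : ℕ) ≤ k := this
      have hba' : (b : ℕ) < a := hba
      omega
    have := Finset.card_le_card_of_injOn (fun k => (s k).1)
      (s := Finset.univ.filter fun k : Fin n => (k : ℕ) < m ∧ ¬ (s k).1 ≤ r1)
      (t := Finset.Ico (r1 + 1) r2) ?_ ?_
    · simpa using this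
    · intro k hk
      simp only [Finset.mem_coe, Finset.mem_filter] at hk
      obtain ⟨-, hkm, hkr⟩ := hk
      have := hcol k hkm (by omega)
      simp only [Finset.mem_coe, Finset.mem_Ico]
      omega
    · intro k hk k' hk' he
      simp only [Finset.coe_filter, Set.mem_setOf_eq, Finset.mem_univ, true_and] at hk hk'
      have c1 := hcol k hk.1 (by omega)
      have c2 := hcol k' hk'.1 (by omega)
      apply hs.1
      exact Prod.ext he (c1.1.trans c2.1.symm)
  have h10 : rowCnt n s m r1 ≤ 2 * (r1 + 1) := cap_lemma n x y s hs hssh m r1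
  omega

lemma lenAdd {n : ℕ} (u v : Equiv.Perm (Fin n))
    (h : ∀ i j : Fin n, i < j → v j < v i → u (v j) < u (v i)) :
    invLen (v.trans u) = invLen u + invLen v := by
  classical
  unfold invLen
  set S : Finset (Fin n × Fin n) := Finset.univ ×ˢ Finset.univ with hS
  have hsplit := Finset.card_filter_add_card_filter_not
    (s := S.filter fun p => p.1 < p.2 ∧ (v.trans u) p.2 < (v.trans u) p.1)
    (p := fun p => v p.1 < v p.2)
  rw [Finset.filter_filter, Finset.filter_filter] at hsplit
  have h1 : (S.filter fun p => (p.1 < p.2 ∧ (v.trans u) p.2 < (v.trans u) p.1) ∧ v p.1 < v p.2).card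
      = (S.filter fun p => p.1 < p.2 ∧ u p.2 < u p.1).card := by
    apply Finset.card_bij (fun p _ => (v p.1, v p.2))
    · rintro ⟨i, j⟩ hp
      rw [Finset.mem_filter] at hp ⊢
      simp only [Finset.mem_filter, Equiv.trans_apply] at hp ⊢
      exact ⟨by simp [hS], hp.2.2, hp.2.1.2⟩
    · rintro ⟨i, j⟩ hi ⟨i', j'⟩ hj hij
      simp only [Prod.mk.injEq] at hij
      exact Prod.ext (v.injective hij.1) (v.injective hij.2)
    · rintro ⟨a, b⟩ hab
      simp only [Finset.mem_filter] at hab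
      obtain ⟨-, hlt, hu⟩ := hab
      refine ⟨(v⁻¹ a, v⁻¹ b), ?_, by simp⟩
      have hne : v⁻¹ a ≠ v⁻¹ b := fun e => absurd (v⁻¹.injective e) (ne_of_lt hlt)
      have hlt' : v⁻¹ a < v⁻¹ b := by
        rcases lt_or_gt_of_ne hne with h' | h'
        · exact h'
        · exfalso
          have := h (v⁻¹ b) (v⁻¹ a) h' (by simpa using hlt)
          simp only [Equiv.Perm.inv_def, Equiv.apply_symm_apply] at this
          exact absurd hu (not_lt_of_gt this)
      rw [Finset.mem_filter]
      simp only [Finset.mem_filter, Equiv.trans_apply, Equiv.Perm.inv_def, Equiv.apply_symm_apply]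
      exact ⟨by simp [hS], ⟨hlt', hu⟩, hlt⟩
  have h2 : (S.filter fun p => (p.1 < p.2 ∧ (v.trans u) p.2 < (v.trans u) p.1) ∧ ¬ v p.1 < v p.2).card
      = (S.filter fun p => p.1 < p.2 ∧ v p.2 < v p.1).card := by
    congr 1
    apply Finset.filter_congr
    rintro ⟨i, j⟩ -
    simp only [Equiv.trans_apply]
    constructor
    · rintro ⟨⟨hij, -⟩, hnv⟩
      refine ⟨hij, ?_⟩
      have hne : v j ≠ v i := fun e => absurd (v.injective e) (ne_of_gt hij)
      rcases lt_or_gt_of_ne hne with h' | h'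
      · exact h'
      · exact absurd h' hnv
    · rintro ⟨hij, hv⟩
      exact ⟨⟨hij, h i j hij hv⟩, not_lt_of_gt hv⟩
  omega


theorem stmt8 (n x y : ℕ) (hn : n = 2 * x + y)
    (t s : Fin n → ℕ × ℕ) (ht : IsStdTab n t) (hs : IsStdTab n s)
    (htsh : ∀ i, memShape2 x y (t i)) (hssh : ∀ i, memShape2 x y (s i))
    (hdom : TabDom n s t)
    (dt ds w : Equiv.Perm (Fin n))
    (hdt : ∀ r, t r = rowTab x n (dt⁻¹ r))
    (hds : ∀ r, s r = rowTab x n (ds⁻¹ r))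
    (hw : ∀ r, s r = t (w⁻¹ r)) :
    invLen ds = invLen dt + invLen w := by
  classical
  -- `ds = dt.trans w`
  have hds_eq : ds = dt.trans w := by
    have hinv : ds⁻¹ = (dt.trans w)⁻¹ := by
      apply Equiv.ext
      intro r
      apply rowTab_inj x n
      have h1 : rowTab x n (ds⁻¹ r) = s r := (hds r).symm
      have h2 : s r = rowTab x n (dt⁻¹ (w⁻¹ r)) := by rw [hw r, hdt (w⁻¹ r)]
      rw [h1, h2]
      rfl
    exact inv_injective hinv
  rw [hds_eq, Nat.add_comm]
  apply lenAdd
  intro i j hij hAB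
  -- the nodes at positions `i` and `j`
  have htB : t (dt i) = rowTab x n i := by
    rw [hdt (dt i)]
    congr 1
    exact Equiv.symm_apply_apply dt i
  have htA : t (dt j) = rowTab x n j := by
    rw [hdt (dt j)]
    congr 1
    exact Equiv.symm_apply_apply dt j
  have hsB : s (w (dt i)) = t (dt i) := by
    rw [hw (w (dt i))]
    congr 1
    exact Equiv.symm_apply_apply w (dt i)
  have hsA : s (w (dt j)) = t (dt j) := by
    rw [hw (w (dt j))]
    congr 1
    exact Equiv.symm_apply_apply w (dt j)
  -- geometry of the two nodes
  have hlex := rowTab_lex x n i j hij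
  rw [← htB, ← htA] at hlex
  have hnond : ¬ ((t (dt i)).1 ≤ (t (dt j)).1 ∧ (t (dt i)).2 ≤ (t (dt j)).2) := by
    rintro ⟨h1, h2⟩
    have := ht.2.2 (dt i) (dt j) h1 h2
    have hAB' : (dt j : ℕ) < (dt i : ℕ) := hAB
    have : ((dt i : Fin n) : ℕ) ≤ (dt j : ℕ) := this
    omega
  have hr12 : (t (dt i)).1 < (t (dt j)).1 := by
    rcases hlex with h | ⟨h1, h2⟩
    · exact h
    · exact absurd ⟨le_of_eq h1, le_of_lt h2⟩ hnond
  have hcB : (t (dt i)).2 = 1 := by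
    have h2 : ¬ (t (dt i)).2 ≤ (t (dt j)).2 := fun h => hnond ⟨le_of_lt hr12, h⟩
    have hlt2 : (t (dt i)).2 < 2 := by
      rcases htsh (dt i) with h | h
      · exact h.2
      · omega
    omega
  have hcA : (t (dt j)).2 = 0 := by
    have h2 : ¬ (t (dt i)).2 ≤ (t (dt j)).2 := fun h => hnond ⟨le_of_lt hr12, h⟩
    omega
  have htBeq : t (dt i) = ((t (dt i)).1, 1) := Prod.ext rfl hcB
  have htAeq : t (dt j) = ((t (dt j)).1, 0) := Prod.ext rfl hcA
  -- conclude by the counting contradiction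
  by_contra hnlt
  have hne : w (dt j) ≠ w (dt i) := fun h => absurd (w.injective h) (ne_of_lt hAB)
  have hba : w (dt i) < w (dt j) := by
    rcases lt_or_gt_of_ne hne with h | h
    · exact absurd h hnlt
    · exact h
  exact key_contra n x y t s ht hs htsh hssh hdom (dt j) (dt i) (w (dt j)) (w (dt i))
    (t (dt i)).1 (t (dt j)).1 hAB htBeq htAeq hr12
    (hsB.trans htBeq) (hsA.trans htAeq) hba
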